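/- arXiv:1804.09519 — 2 statements merged into one kernel-verified Lean document; each statement's English description precedes it below -/
import Mathlib

section
/- Let F be a field, let k be a natural number and set n = 2k+1. Suppose given families of finite-dimensional F-vector spaces (A_j), (B_j), (C_j) indexed by j ∈ ℤ, all of which are zero unless 0 ≤ j ≤ n, together with linear maps ∂_j : A_j → B_{j-1}, i_j : B_j → C_j, p_j : C_j → A_j which form a long exact sequence ⋯ → A_{j+1} --∂_{j+1}--> B_j --i_j--> C_j --p_j--> A_j --∂_j--> B_{j-1} → ⋯ (exact at every term). Assume the duality conditions dim A_j = dim C_{n-j} for all j and dim B_j = dim B_{n-1-j} for all j. Then dim ker(i_k : B_k → C_k) = (1/2) · dim B_k. -/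
/-- Linear-algebra content of the "half lives, half dies" lemma:
given a long exact sequence ⋯ → A_{j+1} → B_j → C_j → A_j → B_{j-1} → ⋯ of
finite-dimensional `F`-vector spaces vanishing outside degrees `0 ≤ j ≤ n = 2k+1`,
with the duality conditions `dim A_j = dim C_{n-j}` and `dim B_j = dim B_{n-1-j}`,
the kernel of `i_k : B_k → C_k` has half the dimension of `B_k`. -/
theorem stmt0 (F : Type*) [Field F] (k : ℕ)
    (A B C : ℤ → Type*)
    [∀ j, AddCommGroup (A j)] [∀ j, Module F (A j)] [∀ j, FiniteDimensional F (A j)]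
    [∀ j, AddCommGroup (B j)] [∀ j, Module F (B j)] [∀ j, FiniteDimensional F (B j)]
    [∀ j, AddCommGroup (C j)] [∀ j, Module F (C j)] [∀ j, FiniteDimensional F (C j)]
    (hA : ∀ j : ℤ, (j < 0 ∨ (2 * k + 1 : ℤ) < j) → Subsingleton (A j))
    (hB : ∀ j : ℤ, (j < 0 ∨ (2 * k + 1 : ℤ) < j) → Subsingleton (B j))
    (hC : ∀ j : ℤ, (j < 0 ∨ (2 * k + 1 : ℤ) < j) → Subsingleton (C j))
    (d : ∀ j : ℤ, A (j + 1) →ₗ[F] B j)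
    (i : ∀ j : ℤ, B j →ₗ[F] C j)
    (p : ∀ j : ℤ, C j →ₗ[F] A j)
    (hexB : ∀ j : ℤ, LinearMap.range (d j) = LinearMap.ker (i j))
    (hexC : ∀ j : ℤ, LinearMap.range (i j) = LinearMap.ker (p j))
    (hexA : ∀ j : ℤ, LinearMap.range (p (j + 1)) = LinearMap.ker (d j))
    (hdualAC : ∀ j : ℤ,
      Module.finrank F (A j) = Module.finrank F (C (2 * k + 1 - j)))
    (hdualB : ∀ j : ℤ,
      Module.finrank F (B j) = Module.finrank F (B (2 * k - j))) :
    2 * Module.finrank F (LinearMap.ker (i k)) = Module.finrank F (B (k : ℤ)) := by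
  -- ranks of the three families of maps
  set x : ℤ → ℕ := fun j => Module.finrank F (LinearMap.range (d j)) with hx
  set y : ℤ → ℕ := fun j => Module.finrank F (LinearMap.range (i j)) with hy
  set z : ℤ → ℕ := fun j => Module.finrank F (LinearMap.range (p j)) with hz
  -- rank-nullity + exactness
  have hxz : ∀ j : ℤ, x j + z (j + 1) = Module.finrank F (A (j + 1)) := by
    intro j
    have h := LinearMap.finrank_range_add_finrank_ker (d j)
    rw [← hexA j] at h
    exact h
  have hyx : ∀ j : ℤ, y j + x j = Module.finrank F (B j) := by
    intro j
    have h := LinearMap.finrank_range_add_finrank_ker (i j)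
    rw [← hexB j] at h
    exact h
  have hzy : ∀ j : ℤ, z j + y j = Module.finrank F (C j) := by
    intro j
    have h := LinearMap.finrank_range_add_finrank_ker (p j)
    rw [← hexC j] at h
    exact h
  -- boundary vanishing
  have hxtop : x (2 * k + 1) = 0 := by
    have hs : Subsingleton (A (2 * k + 1 + 1)) := hA _ (Or.inr (by omega))
    have h0 : Module.finrank F (A (2 * k + 1 + 1)) = 0 :=
      Module.finrank_zero_of_subsingleton
    have h : x (2 * k + 1) + Module.finrank F (LinearMap.ker (d (2 * k + 1)))
        = Module.finrank F (A (2 * k + 1 + 1)) :=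
      LinearMap.finrank_range_add_finrank_ker (d (2 * k + 1))
    omega
  have hyneg : y (-1) = 0 := by
    have hs : Subsingleton (B (-1)) := hB _ (Or.inl (by omega))
    have h0 : Module.finrank F (B (-1)) = 0 := Module.finrank_zero_of_subsingleton
    have h : y (-1) + Module.finrank F (LinearMap.ker (i (-1)))
        = Module.finrank F (B (-1)) :=
      LinearMap.finrank_range_add_finrank_ker (i (-1))
    omega
  -- key pointwise identity from duality
  have key : ∀ m : ℤ, x (2 * k + 1 - m) + x (2 * k - m) = y (m - 1) + y m := by
    intro m
    have h1 := hxz (2 * k - m)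
    rw [show (2 * (k : ℤ) - m) + 1 = 2 * k + 1 - m by ring] at h1
    have h2 := hyx (2 * k + 1 - m)
    have h3 := hzy (2 * k + 1 - m)
    have h4 := hxz (m - 1)
    rw [show (m : ℤ) - 1 + 1 = m by ring] at h4
    have h5 := hyx (m - 1)
    have h6 := hzy m
    have d1 := hdualAC (2 * k + 1 - m)
    rw [show (2 * (k : ℤ) + 1 - (2 * k + 1 - m)) = m by ring] at d1
    have d2 := hdualAC m
    have d3 := hdualB (2 * k + 1 - m)
    rw [show (2 * (k : ℤ) - (2 * k + 1 - m)) = m - 1 by ring] at d3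
    omega
  -- induction: x (2k - m) = y m for all m : ℕ
  have main : ∀ m : ℕ, x (2 * k - m) = y m := by
    intro m
    induction m with
    | zero =>
      have h := key 0
      norm_num at h
      simp only [Nat.cast_zero, sub_zero]
      omega
    | succ m ih =>
      have h := key (m + 1)
      rw [show (2 * (k : ℤ) + 1 - (m + 1)) = 2 * k - m by ring,
        show ((m : ℤ) + 1 - 1) = m by ring] at h
      push_cast
      push_cast at ih h
      omega
  have hk := main k
  rw [show (2 * (k : ℤ) - k) = k by push_cast; ring] at hk
  -- conclude
  have hker : Module.finrank F (LinearMap.ker (i (k : ℤ))) = x (k : ℤ) := by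
    rw [← hexB]
  have hb := hyx (k : ℤ)
  omega
end

section
/- Let A and B be finitely generated free ℤ-modules and let α, β : A → B be ℤ-linear maps such that α is an isomorphism. Then the ℂ(t)-linear map id ⊗ α − t·(id ⊗ β) : ℂ(t) ⊗_ℤ A → ℂ(t) ⊗_ℤ B is an isomorphism of ℂ(t)-vector spaces. -/
open TensorProduct


set_option synthInstance.maxHeartbeats 1000000
set_option maxHeartbeats 1000000

/-- If `A`, `B` are finitely generated free `ℤ`-modules and `α, β : A → B` are
`ℤ`-linear with `α` an isomorphism, then `id ⊗ α - t·(id ⊗ β)` is an isomorphism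
of `ℂ(t)`-vector spaces `ℂ(t) ⊗_ℤ A → ℂ(t) ⊗_ℤ B`. -/
theorem stmt3 (A B : Type*)
    [AddCommGroup A] [Module.Free ℤ A] [Module.Finite ℤ A]
    [AddCommGroup B] [Module.Free ℤ B] [Module.Finite ℤ B]
    (α β : A →ₗ[ℤ] B) (hα : Function.Bijective α) :
    Function.Bijective
      (LinearMap.baseChange (RatFunc ℂ) α
        - (RatFunc.X : RatFunc ℂ) • LinearMap.baseChange (RatFunc ℂ) β) := by
  classical
  set K := RatFunc ℂ
  -- choose a basis of A, transport it to B via α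
  set bA : Module.Basis (Module.Free.ChooseBasisIndex ℤ A) ℤ A := Module.Free.chooseBasis ℤ A
  set e : A ≃ₗ[ℤ] B := LinearEquiv.ofBijective α hα
  set bB : Module.Basis (Module.Free.ChooseBasisIndex ℤ A) ℤ B := bA.map e
  set f :=
    LinearMap.baseChange K α - (RatFunc.X : K) • LinearMap.baseChange K β with hf
  -- matrices over ℤ
  have hMα : LinearMap.toMatrix bA bB α = 1 := by
    ext i j
    simp [LinearMap.toMatrix_apply, bB, e, Matrix.one_apply, Finsupp.single_apply,
      eq_comm]
  set N : Matrix _ _ ℤ := LinearMap.toMatrix bA bB β with hN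
  -- the matrix of f
  set bA' := Algebra.TensorProduct.basis K bA
  set bB' := Algebra.TensorProduct.basis K bB
  have hMf : LinearMap.toMatrix bA' bB' f
      = ((1 : Matrix _ _ (Polynomial ℂ))
          - (Polynomial.X : Polynomial ℂ) • N.map (algebraMap ℤ (Polynomial ℂ))).map
          (algebraMap (Polynomial ℂ) K) := by
    rw [hf, map_sub, map_smul, LinearMap.toMatrix_baseChange,
      LinearMap.toMatrix_baseChange, hMα, ← hN]
    ext i j
    have hX : (RatFunc.X : K) = algebraMap (Polynomial ℂ) K Polynomial.X :=
      RatFunc.algebraMap_X.symm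
    simp only [Matrix.sub_apply, Matrix.smul_apply, Matrix.map_apply, Matrix.one_apply,
      apply_ite (algebraMap ℤ K), apply_ite (algebraMap (Polynomial ℂ) K),
      map_sub, map_mul, map_one, map_zero, smul_eq_mul, hX, map_intCast]
    congr 1
  -- determinant computation
  set P : Matrix _ _ (Polynomial ℂ) :=
    (1 : Matrix _ _ (Polynomial ℂ)) - (Polynomial.X : Polynomial ℂ) • N.map (algebraMap ℤ (Polynomial ℂ)) with hP
  have hdetP : P.det ≠ 0 := by
    intro h
    have := congrArg (Polynomial.eval 0) h
    rw [← Polynomial.coe_evalRingHom, RingHom.map_det] at this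
    have hmap : (Polynomial.evalRingHom 0).mapMatrix P = 1 := by
      ext i j
      by_cases hij : i = j <;> simp [hP, RingHom.mapMatrix_apply, Matrix.one_apply, hij]
    rw [hmap] at this
    simp at this
  have hdet : IsUnit (LinearMap.toMatrix bA' bB' f).det := by
    rw [hMf, ← RingHom.mapMatrix_apply, ← RingHom.map_det]
    refine isUnit_iff_ne_zero.mpr ?_
    intro h
    exact hdetP (IsFractionRing.injective (Polynomial ℂ) K (by simpa using h))
  exact (LinearEquiv.ofIsUnitDet hdet).bijective
end
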